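/- Let (Ω, μ) be a σ-finite measure space, let p : Ω → ℝ be μ-integrable, let y : Ω → ℝ be measurable, and let r > 0. Define P : [−r, r] → ℝ by P(s) = ∫_{{x : y(x) ≥ s}} p dμ for s ∈ [0, r] and P(s) = −∫_{{x : y(x) ≤ s}} p dμ for s ∈ [−r, 0). Then for every continuously differentiable function v : ℝ → ℝ one has ∫_{−r}^r v′(s) P(s) ds = −v(0) ∫_Ω p dμ + ∫_Ω v( max(−r, min(r, y(x))) ) p(x) dμ(x). -/

import Mathlib

open Set Filter Topology MeasureTheory intervalIntegral

/-- For `C¹` test functions `v`,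
`∫_{−r}^r v′(s) P(s) ds = −v(0) ∫_Ω p dμ + ∫_Ω v([y]_{−r}^r) p dμ`, where
`P(s) = ∫_{{y ≥ s}} p dμ` for `s ∈ [0,r]` and `P(s) = −∫_{{y ≤ s}} p dμ` for `s ∈ [−r,0)`,
and `[y]_{−r}^r = max(−r, min(r, y))` is the truncation of `y` to `[−r, r]`. -/
theorem integration_by_parts_levelset_integral {Ω : Type*} [MeasurableSpace Ω]
    (μ : Measure Ω) [SigmaFinite μ] (p : Ω → ℝ) (hp : Integrable p μ)
    (y : Ω → ℝ) (hy : Measurable y) (r : ℝ) (hr : 0 < r)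
    (v : ℝ → ℝ) (hv : ContDiff ℝ 1 v) :
    ∫ s in (-r)..r, deriv v s *
        (if 0 ≤ s then ∫ x in {x | s ≤ y x}, p x ∂μ
          else -∫ x in {x | y x ≤ s}, p x ∂μ) =
      -(v 0) * (∫ x, p x ∂μ) + ∫ x, v (max (-r) (min r (y x))) * p x ∂μ := by
  set T : Ω → ℝ := fun x => max (-r) (min r (y x)) with hT_def
  have hT : Measurable T := measurable_const.max (measurable_const.min hy)
  have hTmem : ∀ x, T x ∈ Icc (-r) r := fun x =>
    ⟨le_max_left _ _, max_le (by linarith) (min_le_left _ _)⟩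
  set g : ℝ → Ω → ℝ := fun s x =>
    (Ioc 0 (T x)).indicator 1 s - (Ico (T x) 0).indicator 1 s with hg_def
  have hv' : Continuous (deriv v) := hv.continuous_deriv le_rfl
  -- characterization of membership
  have hposmem : ∀ s : ℝ, 0 < s → s ≤ r → ∀ x, (s ≤ T x ↔ s ≤ y x) := by
    intro s hs hsr x
    simp only [hT_def, le_max_iff, le_min_iff]
    constructor
    · rintro (h | ⟨h1, h2⟩)
      · linarith
      · exact h2
    · intro h; exact Or.inr ⟨hsr, h⟩
  have hnegmem : ∀ s : ℝ, -r ≤ s → s < 0 → ∀ x, (T x ≤ s ↔ y x ≤ s) := by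
    intro s hs hsr x
    simp only [hT_def, max_le_iff, min_le_iff]
    constructor
    · rintro ⟨h1, h2 | h3⟩
      · linarith
      · exact h3
    · intro h; exact ⟨hs, Or.inr h⟩
  -- the measure on the s-side
  set ν : Measure ℝ := volume.restrict (Ioc (-r) r) with hν_def
  have hνfin : IsFiniteMeasure ν := by
    constructor
    rw [hν_def, Measure.restrict_apply_univ, Real.volume_Ioc]
    exact ENNReal.ofReal_lt_top
  -- bound on deriv v on Icc (-r) r
  obtain ⟨C, hC⟩ := isCompact_Icc.exists_bound_of_continuousOn
    (s := Icc (-r) r) hv'.continuousOn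
  have hC0 : 0 ≤ C := le_trans (norm_nonneg _) (hC (-r) ⟨le_rfl, by linarith⟩)
  -- bound on g
  have hgbd : ∀ s x, ‖g s x‖ ≤ 1 := by
    intro s x
    simp only [hg_def]
    by_cases h1 : s ∈ Ioc 0 (T x) <;> by_cases h2 : s ∈ Ico (T x) 0
    · exact absurd (h1.1.trans h2.2) (lt_irrefl 0)
    · simp [indicator_of_mem h1, indicator_of_notMem h2]
    · simp [indicator_of_notMem h1, indicator_of_mem h2]
    · simp [indicator_of_notMem h1, indicator_of_notMem h2]
  -- measurability of g on the product space
  have hgmeas : Measurable (fun z : ℝ × Ω => g z.1 z.2) := by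
    have h1 : MeasurableSet {z : ℝ × Ω | 0 < z.1 ∧ z.1 ≤ T z.2} :=
      (measurableSet_lt measurable_const measurable_fst).inter
        (measurableSet_le measurable_fst (hT.comp measurable_snd))
    have h2 : MeasurableSet {z : ℝ × Ω | T z.2 ≤ z.1 ∧ z.1 < 0} :=
      (measurableSet_le (hT.comp measurable_snd) measurable_fst).inter
        (measurableSet_lt measurable_fst measurable_const)
    have e1 : (fun z : ℝ × Ω => (Ioc 0 (T z.2)).indicator (1 : ℝ → ℝ) z.1)
        = {z : ℝ × Ω | 0 < z.1 ∧ z.1 ≤ T z.2}.indicator (1 : ℝ × Ω → ℝ) := by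
      funext z
      simp only [Set.indicator_apply, mem_Ioc, mem_setOf_eq, Pi.one_apply]
    have e2 : (fun z : ℝ × Ω => (Ico (T z.2) 0).indicator (1 : ℝ → ℝ) z.1)
        = {z : ℝ × Ω | T z.2 ≤ z.1 ∧ z.1 < 0}.indicator (1 : ℝ × Ω → ℝ) := by
      funext z
      simp only [Set.indicator_apply, mem_Ico, mem_setOf_eq, Pi.one_apply]
    have e3 : (fun z : ℝ × Ω => g z.1 z.2)
        = fun z : ℝ × Ω => {z : ℝ × Ω | 0 < z.1 ∧ z.1 ≤ T z.2}.indicator (1 : ℝ × Ω → ℝ) z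
            - {z : ℝ × Ω | T z.2 ≤ z.1 ∧ z.1 < 0}.indicator (1 : ℝ × Ω → ℝ) z := by
      funext z
      simp only [hg_def]
      rw [congrFun e1 z, congrFun e2 z]
    rw [e3]
    exact (measurable_const.indicator h1).sub (measurable_const.indicator h2)
  -- the product integrand and its integrability
  set H : ℝ × Ω → ℝ := fun z => deriv v z.1 * (g z.1 z.2 * p z.2) with hH_def
  have hHint : Integrable H (ν.prod μ) := by
    have hdom : Integrable (fun z : ℝ × Ω => C * ‖p z.2‖) (ν.prod μ) := by
      have := (integrable_const (μ := ν) (1 : ℝ)).mul_prod hp.norm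
      simpa using this.const_mul C
    refine hdom.mono' ?_ ?_
    · have : AEStronglyMeasurable (fun z : ℝ × Ω => deriv v z.1) (ν.prod μ) :=
        (hv'.measurable.comp measurable_fst).aestronglyMeasurable
      exact this.mul (hgmeas.aestronglyMeasurable.mul
        hp.1.comp_snd)
    · have hae : ∀ᵐ z ∂(ν.prod μ), z ∈ Ioc (-r) r ×ˢ (univ : Set Ω) := by
        rw [hν_def, Measure.restrict_prod_eq_prod_univ]
        exact ae_restrict_mem (measurableSet_Ioc.prod MeasurableSet.univ)
      filter_upwards [hae] with z hz
      have hz1 : z.1 ∈ Icc (-r) r := ⟨hz.1.1.le, hz.1.2⟩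
      calc ‖H z‖ = ‖deriv v z.1‖ * (‖g z.1 z.2‖ * ‖p z.2‖) := by
            simp [hH_def, norm_mul]
        _ ≤ C * (1 * ‖p z.2‖) := by
            apply mul_le_mul (hC _ hz1) _ (by positivity) hC0
            exact mul_le_mul_of_nonneg_right (hgbd _ _) (norm_nonneg _)
        _ = C * ‖p z.2‖ := by ring
  -- Step A: rewrite the LHS integrand a.e.
  have h0ae : ∀ᵐ s ∂ν, (s : ℝ) ≠ 0 := by
    have h1 : ∀ᵐ s : ℝ, s ≠ 0 := by
      rw [ae_iff]
      simp only [not_not]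
      have : {s : ℝ | s = 0} = {0} := by ext s; simp
      rw [this]
      exact Real.volume_singleton
    exact h1.filter_mono (ae_mono Measure.restrict_le_self)
  have stepA : ∀ᵐ s ∂ν,
      deriv v s * (if 0 ≤ s then ∫ x in {x | s ≤ y x}, p x ∂μ
          else -∫ x in {x | y x ≤ s}, p x ∂μ)
        = ∫ x, H (s, x) ∂μ := by
    filter_upwards [ae_restrict_mem measurableSet_Ioc, h0ae] with s hs hs0
    rcases hs0.lt_or_gt with hneg | hpos
    · -- s < 0
      have hfe : (fun x => g s x * p x) = fun x => -({x | y x ≤ s}.indicator p x) := by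
        funext x
        have h1 : s ∉ Ioc 0 (T x) := fun h => absurd (h.1.trans hneg) (lt_irrefl 0)
        by_cases h : y x ≤ s
        · have h2 : s ∈ Ico (T x) 0 := ⟨(hnegmem s hs.1.le hneg x).2 h, hneg⟩
          simp [hg_def, indicator_of_notMem h1, indicator_of_mem h2,
            indicator_of_mem (show x ∈ {x | y x ≤ s} from h)]
        · have h2 : s ∉ Ico (T x) 0 := fun hm =>
            h ((hnegmem s hs.1.le hneg x).1 hm.1)
          simp [hg_def, indicator_of_notMem h1, indicator_of_notMem h2,
            indicator_of_notMem (show x ∉ {x | y x ≤ s} from h)]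
      rw [if_neg (not_le.2 hneg)]
      simp only [hH_def]
      rw [MeasureTheory.integral_const_mul]
      congr 1
      rw [hfe, MeasureTheory.integral_neg, MeasureTheory.integral_indicator (measurableSet_le hy measurable_const)]
    · -- 0 < s
      have hfe : (fun x => g s x * p x) = fun x => {x | s ≤ y x}.indicator p x := by
        funext x
        have h2 : s ∉ Ico (T x) 0 := fun h => absurd (hpos.trans h.2) (lt_irrefl 0)
        by_cases h : s ≤ y x
        · have h1 : s ∈ Ioc 0 (T x) := ⟨hpos, (hposmem s hpos hs.2 x).2 h⟩
          simp [hg_def, indicator_of_mem h1, indicator_of_notMem h2,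
            indicator_of_mem (show x ∈ {x | s ≤ y x} from h)]
        · have h1 : s ∉ Ioc 0 (T x) := fun hm =>
            h ((hposmem s hpos hs.2 x).1 hm.2)
          simp [hg_def, indicator_of_notMem h1, indicator_of_notMem h2,
            indicator_of_notMem (show x ∉ {x | s ≤ y x} from h)]
      rw [if_pos hpos.le]
      simp only [hH_def]
      rw [MeasureTheory.integral_const_mul]
      congr 1
      rw [hfe, MeasureTheory.integral_indicator (measurableSet_le measurable_const hy)]
  -- Step C: the inner integral after swapping
  have stepC : ∀ x : Ω, (∫ s, H (s, x) ∂ν) = (v (T x) - v 0) * p x := by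
    intro x
    have key : (∫ s, deriv v s * g s x ∂ν) = v (T x) - v 0 := by
      have hsupp : ∀ s : ℝ, s ∉ Icc (-r) r → deriv v s * g s x = 0 := by
        intro s hs
        have h1 : s ∉ Ioc 0 (T x) := fun h =>
          hs ⟨by linarith [h.1], h.2.trans (hTmem x).2⟩
        have h2 : s ∉ Ico (T x) 0 := fun h =>
          hs ⟨(hTmem x).1.trans h.1, h.2.le.trans (by linarith)⟩
        simp [hg_def, indicator_of_notMem h1, indicator_of_notMem h2]
      have e1 : (∫ s, deriv v s * g s x ∂ν)
          = ∫ s, deriv v s * g s x := by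
        rw [hν_def, setIntegral_congr_set Ioc_ae_eq_Icc]
        exact setIntegral_eq_integral_of_forall_compl_eq_zero hsupp
      have e2 : (fun s => deriv v s * g s x)
          = fun s => (Ioc 0 (T x)).indicator (deriv v) s
              - (Ico (T x) 0).indicator (deriv v) s := by
        funext s
        simp only [hg_def, mul_sub]
        congr 1
        · by_cases h : s ∈ Ioc 0 (T x)
          · simp [indicator_of_mem h]
          · simp [indicator_of_notMem h]
        · by_cases h : s ∈ Ico (T x) 0
          · simp [indicator_of_mem h]
          · simp [indicator_of_notMem h]
      have i1 : Integrable ((Ioc 0 (T x)).indicator (deriv v)) volume :=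
        (hv'.integrableOn_Ioc).integrable_indicator measurableSet_Ioc
      have i2 : Integrable ((Ico (T x) 0).indicator (deriv v)) volume :=
        (hv'.integrableOn_Icc.mono_set Ico_subset_Icc_self).integrable_indicator
          measurableSet_Ico
      rw [e1, e2, MeasureTheory.integral_sub i1 i2,
        MeasureTheory.integral_indicator measurableSet_Ioc,
        MeasureTheory.integral_indicator measurableSet_Ico]
      have hftc : (∫ s in (0:ℝ)..(T x), deriv v s) = v (T x) - v 0 :=
        intervalIntegral.integral_deriv_eq_sub
          (fun t _ => (hv.differentiable one_ne_zero).differentiableAt)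
          (hv'.intervalIntegrable _ _)
      rcases le_or_gt 0 (T x) with hTx | hTx
      · rw [Ico_eq_empty (not_lt.2 hTx)]
        simp only [Measure.restrict_empty, integral_zero_measure, sub_zero]
        rw [← intervalIntegral.integral_of_le hTx, hftc]
      · rw [Ioc_eq_empty (not_lt.2 hTx.le)]
        simp only [Measure.restrict_empty, integral_zero_measure, zero_sub]
        rw [setIntegral_congr_set Ico_ae_eq_Ioc,
          ← intervalIntegral.integral_of_le hTx.le,
          ← intervalIntegral.integral_symm, hftc]
    calc (∫ s, H (s, x) ∂ν) = (∫ s, deriv v s * g s x ∂ν) * p x := by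
          rw [← MeasureTheory.integral_mul_const]
          simp only [hH_def, mul_assoc]
      _ = (v (T x) - v 0) * p x := by rw [key]
  -- integrability facts for the final step
  obtain ⟨D, hD⟩ := isCompact_Icc.exists_bound_of_continuousOn
    (s := Icc (-r) r) hv.continuous.continuousOn
  have hvTp : Integrable (fun x => v (T x) * p x) μ :=
    hp.bdd_mul ((hv.continuous.measurable.comp hT).aestronglyMeasurable)
      (ae_of_all _ fun x => hD _ (hTmem x))
  -- put everything together
  rw [intervalIntegral.integral_of_le (by linarith : (-r) ≤ r), ← hν_def]
  rw [MeasureTheory.integral_congr_ae stepA]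
  have swap : (∫ s, ∫ x, H (s, x) ∂μ ∂ν) = ∫ x, ∫ s, H (s, x) ∂ν ∂μ :=
    integral_integral_swap hHint
  rw [swap]
  rw [MeasureTheory.integral_congr_ae (Filter.Eventually.of_forall stepC)]
  have : (fun x => (v (T x) - v 0) * p x)
      = fun x => v (T x) * p x - v 0 * p x := by funext x; ring
  rw [this, MeasureTheory.integral_sub hvTp (hp.const_mul (v 0)),
    MeasureTheory.integral_const_mul]
  simp only [hT_def]
  ring
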